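/- If 1 ≤ p < n and n − p < λ < n, then every f ∈ L^{1,λ}(Ω) belongs to the Stummel–Kato class S_p(Ω); moreover, there is a constant c > 0, independent of f and r, such that η_p(f, r) = sup_{x∈Ω} ∫_{Ω∩B_r(x)} |f(y)| / |x−y|^{n−p} dy ≤ c · r^{λ−n+p} · ‖f‖_{L^{1,λ}(Ω)} for all r > 0. In particular η_p(f,r) → 0 as r → 0. -/

import Mathlib

open MeasureTheory Metric Set
open scoped ENNReal NNReal

private lemma pow_rpow_comm' (x : ℝ) (hx : 0 ≤ x) (m : ℕ) (e : ℝ) :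
    (x ^ m) ^ e = (x ^ e) ^ m := by
  rw [← Real.rpow_natCast x m, ← Real.rpow_mul hx, mul_comm, Real.rpow_mul hx,
    Real.rpow_natCast]

private lemma annulus_bound (r q lam e C N : ℝ) (hr : 0 < r) (he : e = lam - q)
    (he' : 0 ≤ e) (hCN : 0 ≤ C * N) (k : ℕ) :
    ((r / 2 ^ (k + 1)) ^ q)⁻¹ * (C * N * (r / 2 ^ k) ^ lam)
      ≤ C * N * 2 ^ lam * r ^ e * (((2 : ℝ) ^ e)⁻¹) ^ k := by
  have hs : (0 : ℝ) < r / 2 ^ (k + 1) := by positivity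
  have e1 : (r / 2 ^ k : ℝ) = 2 * (r / 2 ^ (k + 1)) := by
    rw [pow_succ]; field_simp
  have e2 : ((r / 2 ^ (k + 1)) ^ q)⁻¹ * (r / 2 ^ (k + 1)) ^ lam
      = (r / 2 ^ (k + 1)) ^ e := by
    rw [← Real.rpow_neg hs.le, ← Real.rpow_add hs, he]
    congr 1; ring
  have e3 : (r / 2 ^ (k + 1)) ^ e = r ^ e * (((2 : ℝ) ^ e)⁻¹) ^ (k + 1) := by
    rw [Real.div_rpow hr.le (by positivity), pow_rpow_comm' 2 (by norm_num) (k + 1) e,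
      div_eq_mul_inv, inv_pow]
  have hw1 : ((2 : ℝ) ^ e)⁻¹ ≤ 1 := by
    have : (1 : ℝ) ≤ 2 ^ e := Real.one_le_rpow one_le_two he'
    exact inv_le_one_of_one_le₀ this
  have hw0 : (0 : ℝ) ≤ ((2 : ℝ) ^ e)⁻¹ := by positivity
  have hfac : (0 : ℝ) ≤ C * N * 2 ^ lam * r ^ e := by
    have h1 := Real.rpow_nonneg hr.le e
    have h2 : (0 : ℝ) ≤ (2 : ℝ) ^ lam := Real.rpow_nonneg (by norm_num) lam
    exact mul_nonneg (mul_nonneg hCN h2) h1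
  calc ((r / 2 ^ (k + 1)) ^ q)⁻¹ * (C * N * (r / 2 ^ k) ^ lam)
      = C * N * 2 ^ lam * (((r / 2 ^ (k + 1)) ^ q)⁻¹ * (r / 2 ^ (k + 1)) ^ lam) := by
        rw [e1, Real.mul_rpow (by norm_num) hs.le]; ring
    _ = C * N * 2 ^ lam * r ^ e * (((2 : ℝ) ^ e)⁻¹) ^ (k + 1) := by rw [e2, e3]; ring
    _ ≤ C * N * 2 ^ lam * r ^ e * (((2 : ℝ) ^ e)⁻¹) ^ k := by
        exact mul_le_mul_of_nonneg_left
          (pow_le_pow_of_le_one hw0 hw1 (Nat.le_succ k)) hfac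

set_option maxHeartbeats 1000000 in
/-- If `1 ≤ p < n` and `n - p < λ < n`, then every `f ∈ L^{1,λ}(Ω)` belongs to
the Stummel–Kato class `S_p(Ω)`, with `η_p(f,r) ≤ c r^{λ-n+p} ‖f‖_{L^{1,λ}}`
for a constant `c` independent of `f` and `r`; in particular `η_p(f,r) → 0`
as `r → 0`. -/
theorem morrey_subset_stummel
    (n : ℕ) (p lam : ℝ) (hp : 1 ≤ p) (hpn : p < n)
    (hl1 : (n : ℝ) - p < lam) (hl2 : lam < n)
    (Ω : Set (EuclideanSpace ℝ (Fin n))) (hΩo : IsOpen Ω) (hΩne : Ω.Nonempty)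
    (hΩb : Bornology.IsBounded Ω) :
    ∃ c > (0 : ℝ), ∀ (f : EuclideanSpace ℝ (Fin n) → ℝ) (N : ℝ), 0 ≤ N →
      IntegrableOn f Ω →
      (∀ x ∈ Ω, ∀ ρ : ℝ, 0 < ρ → ρ < Metric.diam Ω →
        ∫ y in Ω ∩ Metric.ball x ρ, |f y| ≤ N * ρ ^ lam) →
      (∀ r : ℝ, 0 < r → ∀ x ∈ Ω,
        ∫ y in Ω ∩ Metric.ball x r, |f y| / ‖x - y‖ ^ ((n : ℝ) - p)
          ≤ c * r ^ (lam - n + p) * N) ∧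
      (∀ ε > (0 : ℝ), ∃ δ > (0 : ℝ), ∀ r : ℝ, 0 < r → r < δ → ∀ x ∈ Ω,
        ∫ y in Ω ∩ Metric.ball x r, |f y| / ‖x - y‖ ^ ((n : ℝ) - p) ≤ ε) := by
  classical
  have h1n : (1 : ℝ) < n := hp.trans_lt hpn
  have hn1 : 1 < n := by exact_mod_cast h1n
  set q : ℝ := (n : ℝ) - p with hq_def
  have hq : 0 < q := by simp only [hq_def]; linarith
  set e : ℝ := lam - n + p with he_def
  have he : 0 < e := by simp only [he_def]; linarith
  have heq : e = lam - q := by simp only [he_def, hq_def]; ring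
  have hlam : 0 < lam := lt_trans hq (by simpa [hq_def] using hl1)
  set d : ℝ := Metric.diam Ω with hd_def
  -- positivity of the diameter
  obtain ⟨x₀, hx₀⟩ := hΩne
  obtain ⟨ε₀, hε₀, hball₀⟩ := Metric.isOpen_iff.mp hΩo x₀ hx₀
  have hd : 0 < d := by
    set v : EuclideanSpace ℝ (Fin n) := EuclideanSpace.single (⟨0, by omega⟩ : Fin n) (ε₀ / 2)
    have hv : ‖v‖ = ε₀ / 2 := by
      simp [v, EuclideanSpace.norm_single, Real.norm_eq_abs, abs_of_pos hε₀]
    have hmem : x₀ + v ∈ Ω := by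
      apply hball₀
      simp only [mem_ball, dist_eq_norm, add_sub_cancel_left, hv]
      linarith
    have h6 := Metric.dist_le_diam_of_mem hΩb hmem hx₀
    rw [dist_eq_norm, add_sub_cancel_left, hv, ← hd_def] at h6
    linarith
  -- finite cover of Ω by balls of radius d/2 centered in Ω
  have hcompact : IsCompact (closure Ω) := hΩb.isCompact_closure
  have hcov : closure Ω ⊆ ⋃ y : Ω, ball (y : EuclideanSpace ℝ (Fin n)) (d / 2) := by
    intro z hz
    obtain ⟨y, hyΩ, hy⟩ := Metric.mem_closure_iff.mp hz (d / 2) (by linarith)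
    exact mem_iUnion.mpr ⟨⟨y, hyΩ⟩, mem_ball.mpr hy⟩
  obtain ⟨t, ht⟩ := hcompact.elim_finite_subcover
    (fun y : Ω => ball (y : EuclideanSpace ℝ (Fin n)) (d / 2)) (fun _ => isOpen_ball) hcov
  set m : ℕ := t.card with hm_def
  set C₁ : ℝ := (m : ℝ) + 1 with hC₁_def
  have hC₁ : 1 ≤ C₁ := by simp [hC₁_def]
  have hC₁m : (m : ℝ) ≤ C₁ := by simp [hC₁_def]
  set w : ℝ := ((2 : ℝ) ^ e)⁻¹ with hw_def
  have hw0 : 0 < w := by positivity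
  have hw1 : w < 1 := by
    rw [hw_def]
    rw [inv_lt_one_iff₀]
    right
    exact Real.one_lt_rpow_iff_of_pos (by norm_num) |>.mpr (Or.inl ⟨by norm_num, he⟩)
  set c : ℝ := C₁ * 2 ^ lam * (1 - w)⁻¹ with hc_def
  have hc : 0 < c := by
    have h2 : (0 : ℝ) < (2:ℝ) ^ lam := Real.rpow_pos_of_pos (by norm_num) lam
    have : (0:ℝ) < 1 - w := by linarith
    positivity
  refine ⟨c, hc, ?_⟩
  intro f N hN hfi hM
  set F : EuclideanSpace ℝ (Fin n) → ℝ≥0∞ := fun y => ENNReal.ofReal |f y| with hF_def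
  -- Morrey bound in lintegral form
  have hMorrey : ∀ x ∈ Ω, ∀ ρ : ℝ, 0 < ρ → ρ < d →
      ∫⁻ y in Ω ∩ ball x ρ, F y ≤ ENNReal.ofReal (N * ρ ^ lam) := by
    intro x hx ρ h0 h1
    have hint : Integrable (fun y => |f y|)
        (volume.restrict (Ω ∩ ball x ρ)) :=
      (hfi.mono_set inter_subset_left).abs
    rw [← ofReal_integral_eq_lintegral_ofReal hint (ae_of_all _ fun y => abs_nonneg _)]
    exact ENNReal.ofReal_le_ofReal (hM x hx ρ h0 h1)
  -- global bound via the finite cover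
  have hGlobal : ∫⁻ y in Ω, F y ≤ ENNReal.ofReal ((m : ℝ) * (N * (d / 2) ^ lam)) := by
    have hsub : Ω ⊆ ⋃ i : t, (Ω ∩ ball ((i : Ω) : EuclideanSpace ℝ (Fin n)) (d / 2)) := by
      intro z hz
      have h2 := ht (subset_closure hz)
      simp only [mem_iUnion] at h2 ⊢
      obtain ⟨i, hi, h⟩ := h2
      exact ⟨⟨i, hi⟩, hz, h⟩
    calc ∫⁻ y in Ω, F y
        ≤ ∫⁻ y in ⋃ i : t, (Ω ∩ ball ((i : Ω) : EuclideanSpace ℝ (Fin n)) (d / 2)), F y :=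
          lintegral_mono_set hsub
      _ ≤ ∑' i : t, ∫⁻ y in Ω ∩ ball ((i : Ω) : EuclideanSpace ℝ (Fin n)) (d / 2), F y :=
          lintegral_iUnion_le _ _
      _ ≤ ∑' _i : t, ENNReal.ofReal (N * (d / 2) ^ lam) :=
          ENNReal.tsum_le_tsum fun i =>
            hMorrey _ (i : Ω).2 _ (by linarith) (by linarith)
      _ = (t.card : ℝ≥0∞) * ENNReal.ofReal (N * (d / 2) ^ lam) := by
          rw [tsum_fintype, Finset.sum_const, Finset.card_univ, Fintype.card_coe, nsmul_eq_mul]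
      _ = ENNReal.ofReal ((m : ℝ) * (N * (d / 2) ^ lam)) := by
          rw [ENNReal.ofReal_mul (Nat.cast_nonneg m), ENNReal.ofReal_natCast, hm_def]
  -- Morrey bound for all radii
  have hAll : ∀ x ∈ Ω, ∀ ρ : ℝ, 0 < ρ →
      ∫⁻ y in Ω ∩ ball x ρ, F y ≤ ENNReal.ofReal (C₁ * N * ρ ^ lam) := by
    intro x hx ρ hρ
    rcases lt_or_ge ρ d with h | h
    · refine (hMorrey x hx ρ hρ h).trans (ENNReal.ofReal_le_ofReal ?_)
      have h1 : 0 ≤ N * ρ ^ lam := mul_nonneg hN (Real.rpow_nonneg hρ.le _)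
      nlinarith
    · refine (lintegral_mono_set inter_subset_left).trans
        (hGlobal.trans (ENNReal.ofReal_le_ofReal ?_))
      have h1 : (d / 2 : ℝ) ^ lam ≤ ρ ^ lam :=
        Real.rpow_le_rpow (by positivity) (by linarith) hlam.le
      calc (m : ℝ) * (N * (d / 2) ^ lam)
          ≤ C₁ * (N * ρ ^ lam) := by
            apply mul_le_mul hC₁m (mul_le_mul_of_nonneg_left h1 hN) (by positivity)
              (by linarith)
        _ = C₁ * N * ρ ^ lam := by ring
  -- key pointwise-in-(x,r) lintegral estimate
  have key : ∀ r : ℝ, 0 < r → ∀ x ∈ Ω,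
      ∫⁻ y in Ω ∩ ball x r, ENNReal.ofReal (|f y| / ‖x - y‖ ^ q)
        ≤ ENNReal.ofReal (c * r ^ e * N) := by
    intro r hr x hx
    set G : EuclideanSpace ℝ (Fin n) → ℝ≥0∞ :=
      fun y => ENNReal.ofReal (|f y| / ‖x - y‖ ^ q) with hG_def
    set s : ℕ → ℝ := fun k => r / 2 ^ (k + 1) with hs_def
    have hs_pos : ∀ k, 0 < s k := fun k => by positivity
    set A : ℕ → Set (EuclideanSpace ℝ (Fin n)) :=
      fun k => ball x (r / 2 ^ k) \ ball x (s k) with hA_def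
    have hcover : Ω ∩ ball x r ⊆ {x} ∪ ⋃ k, (Ω ∩ A k) := by
      rintro y ⟨hyΩ, hyb⟩
      rcases eq_or_ne y x with hyx | hyx
      · exact Or.inl (by simp [hyx])
      refine Or.inr ?_
      have ht0 : 0 < dist y x := dist_pos.mpr hyx
      have hlt : dist y x < r := mem_ball.mp hyb
      have hex : ∃ k, r / 2 ^ (k + 1) ≤ dist y x := by
        obtain ⟨K, hK⟩ := exists_pow_lt_of_lt_one (div_pos ht0 hr)
          (by norm_num : (1 : ℝ) / 2 < 1)
        refine ⟨K, ?_⟩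
        have h2 : ((1 : ℝ) / 2) ^ (K + 1) ≤ (1 / 2) ^ K :=
          pow_le_pow_of_le_one (by norm_num) (by norm_num) (Nat.le_succ K)
        have h3 : ((1 : ℝ) / 2) ^ (K + 1) ≤ dist y x / r := h2.trans hK.le
        have h4 : r * ((1 : ℝ) / 2) ^ (K + 1) ≤ r * (dist y x / r) :=
          mul_le_mul_of_nonneg_left h3 hr.le
        have h5 : r * (dist y x / r) = dist y x := by field_simp
        rw [h5] at h4
        calc r / 2 ^ (K + 1) = r * ((1 : ℝ) / 2) ^ (K + 1) := by rw [one_div, inv_pow, div_eq_mul_inv]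
          _ ≤ dist y x := h4
      set k₀ := Nat.find hex with hk₀
      have hfind1 : r / 2 ^ (k₀ + 1) ≤ dist y x := Nat.find_spec hex
      have hfind2 : dist y x < r / 2 ^ k₀ := by
        rcases Nat.eq_zero_or_pos k₀ with h0 | h0
        · simpa [h0] using hlt
        · have hmin := Nat.find_min hex (Nat.sub_lt h0 one_pos)
          push_neg at hmin
          have hk1 : k₀ - 1 + 1 = k₀ := by omega
          rw [← hk₀, hk1] at hmin
          exact hmin
      refine mem_iUnion.mpr ⟨k₀, hyΩ, mem_ball.mpr hfind2, fun hcon => ?_⟩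
      exact absurd (mem_ball.mp hcon) (not_lt.mpr hfind1)
    have hGx : G x = 0 := by
      simp [hG_def, sub_self, Real.zero_rpow (ne_of_gt hq), div_zero]
    have hsingle : ∫⁻ y in ({x} : Set (EuclideanSpace ℝ (Fin n))), G y ≤ 0 := by
      rw [lintegral_singleton, hGx, zero_mul]
    have hterm : ∀ k : ℕ, ∫⁻ y in Ω ∩ A k, G y
        ≤ ENNReal.ofReal (C₁ * N * 2 ^ lam * r ^ e * w ^ k) := by
      intro k
      have hsk := hs_pos k
      have hskq : 0 < s k ^ q := Real.rpow_pos_of_pos hsk q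
      have hmeasA : MeasurableSet (Ω ∩ A k) :=
        hΩo.measurableSet.inter (measurableSet_ball.diff measurableSet_ball)
      have hpt : ∀ y ∈ Ω ∩ A k, G y ≤ ENNReal.ofReal ((s k ^ q)⁻¹) * F y := by
        rintro y ⟨-, hy1, hy2⟩
        have hdist : s k ≤ dist y x := not_lt.mp fun hcon => hy2 (mem_ball.mpr hcon)
        have hnorm : s k ≤ ‖x - y‖ := by
          rw [norm_sub_rev, ← dist_eq_norm_sub]; exact hdist
        have h1 : s k ^ q ≤ ‖x - y‖ ^ q := Real.rpow_le_rpow hsk.le hnorm hq.le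
        have h2 : |f y| / ‖x - y‖ ^ q ≤ |f y| / s k ^ q := by
          gcongr

        calc G y ≤ ENNReal.ofReal (|f y| / s k ^ q) := ENNReal.ofReal_le_ofReal h2
          _ = ENNReal.ofReal ((s k ^ q)⁻¹) * F y := by
              rw [div_eq_mul_inv, mul_comm (|f y|),
                ENNReal.ofReal_mul (inv_nonneg.mpr hskq.le)]
      calc ∫⁻ y in Ω ∩ A k, G y
          ≤ ∫⁻ y in Ω ∩ A k, ENNReal.ofReal ((s k ^ q)⁻¹) * F y :=
            setLIntegral_mono' hmeasA hpt
        _ = ENNReal.ofReal ((s k ^ q)⁻¹) * ∫⁻ y in Ω ∩ A k, F y :=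
            lintegral_const_mul' _ _ ENNReal.ofReal_ne_top
        _ ≤ ENNReal.ofReal ((s k ^ q)⁻¹) * ∫⁻ y in Ω ∩ ball x (r / 2 ^ k), F y := by
            gcongr
            exact diff_subset
        _ ≤ ENNReal.ofReal ((s k ^ q)⁻¹) * ENNReal.ofReal (C₁ * N * (r / 2 ^ k) ^ lam) := by
            gcongr
            exact hAll x hx _ (by positivity)
        _ = ENNReal.ofReal ((s k ^ q)⁻¹ * (C₁ * N * (r / 2 ^ k) ^ lam)) :=
            (ENNReal.ofReal_mul (inv_nonneg.mpr hskq.le)).symm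
        _ ≤ ENNReal.ofReal (C₁ * N * 2 ^ lam * r ^ e * w ^ k) := by
            apply ENNReal.ofReal_le_ofReal
            simpa [hs_def, hw_def] using
              annulus_bound r q lam e C₁ N hr heq he.le
                (mul_nonneg (by linarith) hN) k
    have hsum : ∑' k : ℕ, ENNReal.ofReal (C₁ * N * 2 ^ lam * r ^ e * w ^ k)
        ≤ ENNReal.ofReal (c * r ^ e * N) := by
      refine le_of_eq ?_
      have hB : 0 ≤ C₁ * N * 2 ^ lam * r ^ e := by
        have h2 : (0 : ℝ) ≤ (2:ℝ) ^ lam := Real.rpow_nonneg (by norm_num) lam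
        have h3 : (0 : ℝ) ≤ r ^ e := Real.rpow_nonneg hr.le e
        have := mul_nonneg (mul_nonneg (mul_nonneg (by linarith : (0:ℝ) ≤ C₁) hN) h2) h3
        linarith
      calc ∑' k : ℕ, ENNReal.ofReal (C₁ * N * 2 ^ lam * r ^ e * w ^ k)
          = ∑' k : ℕ, ENNReal.ofReal (C₁ * N * 2 ^ lam * r ^ e) * (ENNReal.ofReal w) ^ k := by
            congr 1
            funext k
            rw [ENNReal.ofReal_mul hB, ENNReal.ofReal_pow hw0.le]
        _ = ENNReal.ofReal (C₁ * N * 2 ^ lam * r ^ e) * (1 - ENNReal.ofReal w)⁻¹ := by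
            rw [ENNReal.tsum_mul_left, ENNReal.tsum_geometric]
        _ = ENNReal.ofReal (C₁ * N * 2 ^ lam * r ^ e) * ENNReal.ofReal ((1 - w)⁻¹) := by
            rw [← ENNReal.ofReal_one, ← ENNReal.ofReal_sub _ hw0.le,
              ENNReal.ofReal_inv_of_pos (by linarith)]
        _ = ENNReal.ofReal (C₁ * N * 2 ^ lam * r ^ e * (1 - w)⁻¹) :=
            (ENNReal.ofReal_mul hB).symm
        _ = ENNReal.ofReal (c * r ^ e * N) := by
            congr 1
            rw [hc_def]; ring
    calc ∫⁻ y in Ω ∩ ball x r, G y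
        ≤ ∫⁻ y in ({x} : Set (EuclideanSpace ℝ (Fin n))) ∪ ⋃ k, (Ω ∩ A k), G y :=
          lintegral_mono_set hcover
      _ ≤ (∫⁻ y in ({x} : Set (EuclideanSpace ℝ (Fin n))), G y)
            + ∫⁻ y in ⋃ k, (Ω ∩ A k), G y := lintegral_union_le _ _ _
      _ ≤ 0 + ∑' k : ℕ, ∫⁻ y in Ω ∩ A k, G y :=
          add_le_add hsingle (lintegral_iUnion_le _ _)
      _ = ∑' k : ℕ, ∫⁻ y in Ω ∩ A k, G y := zero_add _
      _ ≤ ∑' k : ℕ, ENNReal.ofReal (C₁ * N * 2 ^ lam * r ^ e * w ^ k) :=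
          ENNReal.tsum_le_tsum hterm
      _ ≤ ENNReal.ofReal (c * r ^ e * N) := hsum
  -- convert to Bochner integrals
  have part1 : ∀ r : ℝ, 0 < r → ∀ x ∈ Ω,
      ∫ y in Ω ∩ ball x r, |f y| / ‖x - y‖ ^ q ≤ c * r ^ e * N := by
    intro r hr x hx
    have hmeas : AEStronglyMeasurable (fun y => |f y| / ‖x - y‖ ^ q)
        (volume.restrict (Ω ∩ ball x r)) := by
      have h1 : AEStronglyMeasurable f (volume.restrict (Ω ∩ ball x r)) :=
        hfi.aestronglyMeasurable.mono_measure
          (Measure.restrict_mono inter_subset_left le_rfl)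
      have h2 : AEMeasurable (fun y => |f y|) (volume.restrict (Ω ∩ ball x r)) :=
        measurable_abs.comp_aemeasurable h1.aemeasurable
      have h3 : Continuous fun y : EuclideanSpace ℝ (Fin n) => ‖x - y‖ ^ q :=
        (continuous_const.sub continuous_id).norm.rpow_const fun y => Or.inr hq.le
      exact (h2.div h3.measurable.aemeasurable).aestronglyMeasurable
    rw [integral_eq_lintegral_of_nonneg_ae
      (ae_of_all _ fun y => div_nonneg (abs_nonneg _)
        (Real.rpow_nonneg (norm_nonneg _) _)) hmeas]
    refine ENNReal.toReal_le_of_le_ofReal ?_ (key r hr x hx)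
    exact mul_nonneg (mul_nonneg hc.le (Real.rpow_nonneg hr.le _)) hN
  refine ⟨part1, ?_⟩
  intro ε hε
  have hcN : 0 < c * (N + 1) := by positivity
  set δ : ℝ := (ε / (c * (N + 1))) ^ (1 / e) with hδ_def
  have hδ : 0 < δ := Real.rpow_pos_of_pos (div_pos hε hcN) _
  refine ⟨δ, hδ, ?_⟩
  intro r hr hrδ x hx
  refine (part1 r hr x hx).trans ?_
  have hre : r ^ e ≤ δ ^ e := Real.rpow_le_rpow hr.le hrδ.le he.le
  have hδe : δ ^ e = ε / (c * (N + 1)) := by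
    rw [hδ_def, ← Real.rpow_mul (div_pos hε hcN).le, one_div,
      inv_mul_cancel₀ (ne_of_gt he), Real.rpow_one]
  have hδe0 : 0 ≤ δ ^ e := Real.rpow_nonneg hδ.le e
  have hkey : c * δ ^ e * (N + 1) = ε := by
    rw [hδe]
    calc c * (ε / (c * (N + 1))) * (N + 1) = ε / (c * (N + 1)) * (c * (N + 1)) := by ring
      _ = ε := div_mul_cancel₀ _ (ne_of_gt hcN)
  have h3 : c * r ^ e ≤ c * δ ^ e := mul_le_mul_of_nonneg_left hre hc.le
  have h4 : c * r ^ e * N ≤ c * δ ^ e * N :=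
    mul_le_mul_of_nonneg_right h3 hN
  have h5 : c * δ ^ e * N ≤ c * δ ^ e * (N + 1) := by
    have := mul_nonneg hc.le hδe0
    nlinarith
  linarith
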